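/- arXiv:1911.04181 — 2 statements merged into one kernel-verified Lean document; each statement's English description precedes it below -/
import Mathlib

section
/- Let ρ' : Γ → PSL(2,ℂ) be a group homomorphism such that ρ'(qᵢ) = 1 for exactly one index i ∈ {1,…,6}. Then there is no group homomorphism σ : Γ₂ → SL(2,ℂ) such that π ∘ σ = ρ' ∘ ι, where π : SL(2,ℂ) → PSL(2,ℂ) is the quotient map. (In particular, a pentagon representation does not lift to SL(2,ℂ).) -/
/- Common setup: PSL(2,ℂ), its action on ℙ¹(ℂ), loxodromic/parabolic/elliptic elements,
elementary subgroups, surface groups, the pentagon group Γ and the embedding ι. -/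

noncomputable section

open Matrix

/-- `SL(2,ℂ)`. -/
abbrev SL2C : Type := Matrix.SpecialLinearGroup (Fin 2) ℂ

instance : TopologicalSpace SL2C := instTopologicalSpaceSubtype

/-- `PSL(2,ℂ)`, the quotient of `SL(2,ℂ)` by its center `{±I}`. -/
abbrev PSL2C : Type := SL2C ⧸ Subgroup.center SL2C

/-- The quotient map `SL(2,ℂ) → PSL(2,ℂ)`. -/
def projPSL : SL2C →* PSL2C := QuotientGroup.mk' (Subgroup.center SL2C)

/-- The complex projective line `ℙ¹(ℂ)`. -/
abbrev P1 : Type := Projectivization ℂ (Fin 2 → ℂ)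

/-- The square of the trace, well defined on `PSL(2,ℂ)`. -/
def trSq (g : PSL2C) : ℂ :=
  (Matrix.trace ((Quotient.out g : SL2C) : Matrix (Fin 2) (Fin 2) ℂ)) ^ 2

/-- `g` is loxodromic iff `tr² g` is not a real number in `[0,4]`. -/
def IsLoxodromic (g : PSL2C) : Prop := ¬ ∃ r : ℝ, 0 ≤ r ∧ r ≤ 4 ∧ trSq g = (r : ℂ)

/-- `g` is parabolic iff `g ≠ 1` and `tr² g = 4`. -/
def IsParabolic (g : PSL2C) : Prop := g ≠ 1 ∧ trSq g = 4

/-- `g` is elliptic iff `g ≠ 1` and `tr² g` is a real number in `[0,4)`. -/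
def IsElliptic (g : PSL2C) : Prop := g ≠ 1 ∧ ∃ r : ℝ, 0 ≤ r ∧ r < 4 ∧ trSq g = (r : ℂ)

lemma sl2_toLin'_injective (g : SL2C) :
    Function.Injective (Matrix.toLin' (g : Matrix (Fin 2) (Fin 2) ℂ)) := by
  intro v w h
  have h2 : Matrix.toLin' ((g⁻¹ : SL2C) : Matrix (Fin 2) (Fin 2) ℂ)
      (Matrix.toLin' ((g : SL2C) : Matrix (Fin 2) (Fin 2) ℂ) v) =
      Matrix.toLin' ((g⁻¹ : SL2C) : Matrix (Fin 2) (Fin 2) ℂ)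
      (Matrix.toLin' ((g : SL2C) : Matrix (Fin 2) (Fin 2) ℂ) w) := by rw [h]
  rwa [← Matrix.toLin'_mul_apply, ← Matrix.toLin'_mul_apply,
    ← Matrix.SpecialLinearGroup.coe_mul, inv_mul_cancel,
    Matrix.SpecialLinearGroup.coe_one, Matrix.toLin'_one, LinearMap.id_apply,
    LinearMap.id_apply] at h2

/-- The action of `PSL(2,ℂ)` on `ℙ¹(ℂ)` by Möbius transformations (independent of the
choice of representative, since the center acts trivially on lines). -/
def pslAct (g : PSL2C) (x : P1) : P1 :=
  Projectivization.map (Matrix.toLin' ((Quotient.out g : SL2C) : Matrix (Fin 2) (Fin 2) ℂ))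
    (sl2_toLin'_injective _) x

/-- A subgroup of `PSL(2,ℂ)` is elementary if it has a nonempty invariant subset of `ℙ¹(ℂ)`
with at most two elements, or its closure is compact. -/
def IsElementarySubgroup (G : Subgroup PSL2C) : Prop :=
  (∃ S : Set P1, S.Nonempty ∧ S.Finite ∧ S.ncard ≤ 2 ∧ ∀ g ∈ G, pslAct g '' S = S) ∨
    IsCompact (closure (G : Set PSL2C))

/-- A homomorphism to `PSL(2,ℂ)` is non-elementary if its image is non-elementary. -/
def IsNonElem {H : Type*} [Group H] (ρ : H →* PSL2C) : Prop :=
  ¬ IsElementarySubgroup ρ.range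

/-- `g` sends a fixed point of `h` to the other one. -/
def SendsFixedToOther (g h : PSL2C) : Prop :=
  ∃ p q : P1, p ≠ q ∧ pslAct h p = p ∧ pslAct h q = q ∧ (pslAct g p = q ∨ pslAct g q = p)

/-- `g` interchanges the two fixed points of `h`. -/
def InterchangesFixed (g h : PSL2C) : Prop :=
  ∃ p q : P1, p ≠ q ∧ pslAct h p = p ∧ pslAct h q = q ∧ pslAct g p = q ∧ pslAct g q = p

/-- `PSL(2,ℝ)` as a subgroup of `PSL(2,ℂ)`: the image of `SL(2,ℝ)`. -/
def PSL2R : Subgroup PSL2C :=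
  (projPSL.comp (Matrix.SpecialLinearGroup.map (n := Fin 2) Complex.ofRealHom)).range

/-- `γ₁, γ₂` generate a rank-two Schottky group: the induced map from the free group `F₂` is
injective, with discrete image, all of whose nontrivial elements are loxodromic. -/
def GeneratesSchottky (γ₁ γ₂ : PSL2C) : Prop :=
  Function.Injective (FreeGroup.lift ![γ₁, γ₂] : FreeGroup (Fin 2) →* PSL2C) ∧
    DiscreteTopology ((FreeGroup.lift ![γ₁, γ₂] : FreeGroup (Fin 2) →* PSL2C).range) ∧
    ∀ g ∈ (FreeGroup.lift ![γ₁, γ₂] : FreeGroup (Fin 2) →* PSL2C).range, g ≠ 1 → IsLoxodromic g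

/-- The commutator `[x,y] = y⁻¹x⁻¹yx` in a free group. -/
def commF {α : Type*} (x y : FreeGroup α) : FreeGroup α := y⁻¹ * x⁻¹ * y * x

/-- The surface relator `[a_g,b_g]⋯[a₁,b₁]`. -/
def surfaceRel (g : ℕ) : FreeGroup (Fin g × Bool) :=
  (((List.finRange g).reverse).map
    (fun i => commF (FreeGroup.of (i, false)) (FreeGroup.of (i, true)))).prod

/-- The genus-`g` surface group `Γ_g`. -/
abbrev SurfaceGroup (g : ℕ) : Type :=
  PresentedGroup ({surfaceRel g} : Set (FreeGroup (Fin g × Bool)))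

/-- The generator `a_{i+1}` of `Γ_g`. -/
def sgA (g : ℕ) (i : Fin g) : SurfaceGroup g := PresentedGroup.of (i, false)

/-- The generator `b_{i+1}` of `Γ_g`. -/
def sgB (g : ℕ) (i : Fin g) : SurfaceGroup g := PresentedGroup.of (i, true)

/-- The genus-2 surface group `Γ₂`. -/
abbrev Gamma2 : Type := SurfaceGroup 2
def a1 : Gamma2 := sgA 2 0
def b1 : Gamma2 := sgB 2 0
def a2 : Gamma2 := sgA 2 1
def b2 : Gamma2 := sgB 2 1

/-- Relations for the group `Γ = ⟨q₁,…,q₆ ∣ qᵢ² = 1, q₁q₂q₃q₄q₅q₆ = 1⟩`. -/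
def pentagonRels : Set (FreeGroup (Fin 6)) :=
  (Set.range fun i : Fin 6 => FreeGroup.of i * FreeGroup.of i) ∪
    {((List.finRange 6).map FreeGroup.of).prod}

/-- The group `Γ = ⟨q₁,…,q₆ ∣ qᵢ² = 1, q₁q₂q₃q₄q₅q₆ = 1⟩`. -/
abbrev GammaP : Type := PresentedGroup pentagonRels

/-- The generator `q_{i+1}` of `Γ`. -/
def qgen (i : Fin 6) : GammaP := PresentedGroup.of i

lemma qgen_mul_self (i : Fin 6) : qgen i * qgen i = 1 := by
  have hmem : FreeGroup.of i * FreeGroup.of i ∈ pentagonRels :=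
    Set.mem_union_left _ ⟨i, rfl⟩
  have h : (PresentedGroup.mk pentagonRels (FreeGroup.of i * FreeGroup.of i)) = 1 :=
    (QuotientGroup.eq_one_iff _).mpr (Subgroup.subset_normalClosure hmem)
  rw [_root_.map_mul] at h
  exact h

lemma qgen_prod : qgen 0 * (qgen 1 * (qgen 2 * (qgen 3 * (qgen 4 * qgen 5)))) = 1 := by
  have hmem : ((List.finRange 6).map FreeGroup.of).prod ∈ pentagonRels :=
    Set.mem_union_right _ rfl
  have h : (PresentedGroup.mk pentagonRels (((List.finRange 6).map FreeGroup.of).prod)) = 1 :=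
    (QuotientGroup.eq_one_iff _).mpr (Subgroup.subset_normalClosure hmem)
  have h6 : List.finRange 6 = [0, 1, 2, 3, 4, 5] := by decide
  rw [h6] at h
  simp only [List.map_cons, List.map_nil, List.prod_cons, List.prod_nil, mul_one,
    _root_.map_mul] at h
  exact h

lemma pent_helper {G : Type*} [Group G] (x : Fin 6 → G) (hx : ∀ i, x i * x i = 1)
    (hp : x 0 * (x 1 * (x 2 * (x 3 * (x 4 * x 5)))) = 1) :
    (x 4 * x 5)⁻¹ * (x 4 * x 3)⁻¹ * (x 4 * x 5) * (x 4 * x 3) *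
      ((x 1 * x 2)⁻¹ * (x 1 * x 0)⁻¹ * (x 1 * x 2) * (x 1 * x 0)) = 1 := by
  have hinv : ∀ i, (x i)⁻¹ = x i := fun i => inv_eq_of_mul_eq_one_right (hx i)
  have hrev : x 5 * (x 4 * (x 3 * (x 2 * (x 1 * x 0)))) = 1 := by
    have h := congrArg (·⁻¹) hp
    simpa [_root_.mul_inv_rev, hinv, mul_assoc] using h
  have key : ∀ (i : Fin 6) (t : G), x i * (x i * t) = t := fun i t => by
    rw [← mul_assoc, hx, one_mul]
  have key2 : ∀ t : G, x 5 * (x 4 * (x 3 * (x 2 * (x 1 * (x 0 * t))))) = t := fun t => by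
    calc x 5 * (x 4 * (x 3 * (x 2 * (x 1 * (x 0 * t)))))
        = (x 5 * (x 4 * (x 3 * (x 2 * (x 1 * x 0))))) * t := by simp [mul_assoc]
      _ = t := by rw [hrev, one_mul]
  simp only [_root_.mul_inv_rev, hinv, mul_assoc]
  simp only [key, key2]
  exact hrev

/-- The images of the generators `a₁, b₁, a₂, b₂` under `ι`. -/
def pentMap : Fin 2 × Bool → GammaP
  | (0, false) => qgen 1 * qgen 0
  | (0, true) => qgen 1 * qgen 2
  | (1, false) => qgen 4 * qgen 3
  | (1, true) => qgen 4 * qgen 5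

lemma surfaceRel_two :
    surfaceRel 2 = commF (FreeGroup.of ((1 : Fin 2), false)) (FreeGroup.of ((1 : Fin 2), true)) *
      commF (FreeGroup.of ((0 : Fin 2), false)) (FreeGroup.of ((0 : Fin 2), true)) := by
  have h : List.finRange 2 = [0, 1] := by decide
  simp [surfaceRel, h]

/-- The embedding `ι : Γ₂ → Γ`, `a₁ ↦ q₂q₁`, `b₁ ↦ q₂q₃`, `a₂ ↦ q₅q₄`, `b₂ ↦ q₅q₆`. -/
def iota : Gamma2 →* GammaP :=
  PresentedGroup.toGroup (f := pentMap) (by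
    intro r hr
    rw [Set.mem_singleton_iff] at hr
    subst hr
    rw [surfaceRel_two]
    simp only [commF, _root_.map_mul, _root_.map_inv, FreeGroup.lift_apply_of]
    have h01 : pentMap ((0 : Fin 2), false) = qgen 1 * qgen 0 := rfl
    have h02 : pentMap ((0 : Fin 2), true) = qgen 1 * qgen 2 := rfl
    have h11 : pentMap ((1 : Fin 2), false) = qgen 4 * qgen 3 := rfl
    have h12 : pentMap ((1 : Fin 2), true) = qgen 4 * qgen 5 := rfl
    rw [h01, h02, h11, h12]
    exact pent_helper (fun i => qgen i) qgen_mul_self qgen_prod)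

/-- A pentagon representation: a non-elementary `ρ : Γ₂ → PSL(2,ℂ)` extending to `Γ` with
exactly one `qᵢ` killed. -/
def IsPentagonRep (ρ : Gamma2 →* PSL2C) : Prop :=
  IsNonElem ρ ∧ ∃ ρ' : GammaP →* PSL2C, ρ'.comp iota = ρ ∧ ∃! i : Fin 6, ρ' (qgen i) = 1

/-- A primitive element of the free group `F₂`: part of a free basis. -/
def IsPrimitiveF2 (γ : FreeGroup (Fin 2)) : Prop :=
  ∃ φ : MulAut (FreeGroup (Fin 2)), φ (FreeGroup.of 0) = γ

/-- `pp` and `pm` are the attracting resp. repelling fixed points of `α`: for a representative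
`A ∈ SL(2,ℂ)` with eigenvalues `l, l⁻¹`, `|l| > 1`, they are the corresponding eigenlines. -/
def IsAttrRep (α : PSL2C) (pp pm : P1) : Prop :=
  ∃ A : SL2C, projPSL A = α ∧ ∃ l : ℂ, 1 < ‖l‖ ∧
    ∃ (v w : Fin 2 → ℂ) (hv : v ≠ 0) (hw : w ≠ 0),
      (A : Matrix (Fin 2) (Fin 2) ℂ) *ᵥ v = l • v ∧
      (A : Matrix (Fin 2) (Fin 2) ℂ) *ᵥ w = l⁻¹ • w ∧
      pp = Projectivization.mk ℂ v hv ∧ pm = Projectivization.mk ℂ w hw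


/-! ### Auxiliary lemmas for statement2 -/

lemma st2_scalar_smul (r : ℂ) :
    Matrix.scalar (Fin 2) r = r • (1 : Matrix (Fin 2) (Fin 2) ℂ) := by
  rw [Matrix.scalar_apply]
  ext i j
  by_cases hij : i = j <;> simp [Matrix.diagonal_apply, Matrix.one_apply, hij]

lemma st2_smul_one_eq_one {r : ℂ} (h : r • (1 : Matrix (Fin 2) (Fin 2) ℂ) = 1) : r = 1 := by
  have := congrFun (congrFun h 0) 0
  simpa [Matrix.one_apply] using this

lemma st2_sq_one_mem_center (X : SL2C) (h : X * X = 1) : X ∈ Subgroup.center SL2C := by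
  rw [Matrix.SpecialLinearGroup.mem_center_iff]
  set M : Matrix (Fin 2) (Fin 2) ℂ := (X : Matrix (Fin 2) (Fin 2) ℂ) with hM
  have hdet : M.det = 1 := X.2
  have hsq : M * M = 1 := by
    have := congrArg (Subtype.val) h
    simpa [Matrix.SpecialLinearGroup.coe_mul] using this
  rw [Matrix.det_fin_two] at hdet
  have h00 : M 0 0 * M 0 0 + M 0 1 * M 1 0 = 1 := by
    have := congrFun (congrFun hsq 0) 0
    simpa [Matrix.mul_apply, Fin.sum_univ_two, Matrix.one_apply] using this
  have h01 : M 0 0 * M 0 1 + M 0 1 * M 1 1 = 0 := by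
    have := congrFun (congrFun hsq 0) 1
    simpa [Matrix.mul_apply, Fin.sum_univ_two, Matrix.one_apply] using this
  have h10 : M 1 0 * M 0 0 + M 1 1 * M 1 0 = 0 := by
    have := congrFun (congrFun hsq 1) 0
    simpa [Matrix.mul_apply, Fin.sum_univ_two, Matrix.one_apply] using this
  by_cases ht : M 0 0 + M 1 1 = 0
  · exfalso
    have : (1 : ℂ) = -1 := by
      have h11 : M 1 1 = - M 0 0 := by linear_combination ht
      calc (1:ℂ) = M 0 0 * M 1 1 - M 0 1 * M 1 0 := hdet.symm
        _ = -(M 0 0 * M 0 0 + M 0 1 * M 1 0) := by rw [h11]; ring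
        _ = -1 := by rw [h00]
    norm_num at this
  · have hb : M 0 1 = 0 := by
      rcases mul_eq_zero.mp (show M 0 1 * (M 0 0 + M 1 1) = 0 by linear_combination h01) with h|h
      · exact h
      · exact absurd h ht
    have hc : M 1 0 = 0 := by
      rcases mul_eq_zero.mp (show M 1 0 * (M 0 0 + M 1 1) = 0 by linear_combination h10) with h|h
      · exact h
      · exact absurd h ht
    have ha : M 0 0 * M 0 0 = 1 := by linear_combination h00 - M 1 0 * hb
    refine ⟨M 0 0, by simpa [Fintype.card_fin, pow_two] using ha, ?_⟩
    have hd : M 1 1 = M 0 0 := by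
      linear_combination M 0 0 * hdet - M 1 1 * ha + (M 0 0 * M 1 0) * hb
    ext i j
    fin_cases i <;> fin_cases j <;>
      simp [Matrix.scalar_apply, Matrix.diagonal_apply, hb, hc, hd]

lemma st2_comm_cancel {G : Type*} [Group G] (a b z w : G)
    (hz : ∀ g, z * g = g * z) (hw : ∀ g, w * g = g * w) :
    (w * b)⁻¹ * ((z * a)⁻¹ * ((w * b) * (z * a))) = b⁻¹ * (a⁻¹ * (b * a)) := by
  calc (w * b)⁻¹ * ((z * a)⁻¹ * ((w * b) * (z * a)))
      = b⁻¹ * (w⁻¹ * (a⁻¹ * (z⁻¹ * (w * (b * (z * a)))))) := by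
        simp [_root_.mul_inv_rev, mul_assoc]
    _ = b⁻¹ * (w⁻¹ * (a⁻¹ * (z⁻¹ * (w * (z * (b * a)))))) := by
        rw [show b * (z * a) = z * (b * a) by rw [← mul_assoc, ← hz b, mul_assoc]]
    _ = b⁻¹ * (w⁻¹ * (a⁻¹ * (z⁻¹ * (z * (w * (b * a)))))) := by
        rw [show w * (z * (b * a)) = z * (w * (b * a)) by rw [← mul_assoc, ← hz w, mul_assoc]]
    _ = b⁻¹ * (w⁻¹ * (a⁻¹ * (w * (b * a)))) := by rw [inv_mul_cancel_left]
    _ = b⁻¹ * (w⁻¹ * (w * (a⁻¹ * (b * a)))) := by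
        rw [show a⁻¹ * (w * (b * a)) = w * (a⁻¹ * (b * a)) by
          rw [← mul_assoc, ← hw a⁻¹, mul_assoc]]
    _ = b⁻¹ * (a⁻¹ * (b * a)) := by rw [inv_mul_cancel_left]

lemma st2_gamma2_rel :
    (b2⁻¹ * (a2⁻¹ * (b2 * a2))) * (b1⁻¹ * (a1⁻¹ * (b1 * a1))) = 1 := by
  have hmem : surfaceRel 2 ∈ ({surfaceRel 2} : Set (FreeGroup (Fin 2 × Bool))) := rfl
  have h : (PresentedGroup.mk {surfaceRel 2} (surfaceRel 2)) = 1 :=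
    (QuotientGroup.eq_one_iff _).mpr (Subgroup.subset_normalClosure hmem)
  rw [congrArg (PresentedGroup.mk ({surfaceRel 2} : Set (FreeGroup (Fin 2 × Bool))))
    surfaceRel_two] at h
  simp only [commF, _root_.map_mul, _root_.map_inv] at h
  simpa [a1, b1, a2, b2, sgA, sgB, PresentedGroup.of, mul_assoc] using h

/-- a representation `ρ' : Γ → PSL(2,ℂ)` killing exactly one `qᵢ` gives a
representation `ρ' ∘ ι` of `Γ₂` which does not lift to `SL(2,ℂ)`. -/
theorem statement2 (ρ' : GammaP →* PSL2C) (h : ∃! i : Fin 6, ρ' (qgen i) = 1) :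
    ¬ ∃ σ : Gamma2 →* SL2C, projPSL.comp σ = ρ'.comp iota := by
  rintro ⟨σ, hσ⟩
  classical
  -- choose lifts of the generators
  choose Q hQ using fun i : Fin 6 =>
    QuotientGroup.mk'_surjective (Subgroup.center SL2C) (ρ' (qgen i))
  have hQ' : ∀ i, projPSL (Q i) = ρ' (qgen i) := hQ
  set s : Fin 6 → SL2C := fun i => Q i * Q i with hs_def
  have hs_center : ∀ i, s i ∈ Subgroup.center SL2C := by
    intro i
    have h1 : projPSL (s i) = 1 := by
      show projPSL (Q i * Q i) = 1
      rw [_root_.map_mul, hQ', ← _root_.map_mul, qgen_mul_self, _root_.map_one]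
    exact (QuotientGroup.eq_one_iff _).mp h1
  choose r hrpow hrs using fun i => Matrix.SpecialLinearGroup.mem_center_iff.mp (hs_center i)
  have hr2 : ∀ i, r i * r i = 1 := fun i => by
    have := hrpow i; rwa [Fintype.card_fin, pow_two] at this
  have hscoe : ∀ i, ((s i : SL2C) : Matrix (Fin 2) (Fin 2) ℂ) = r i • 1 := fun i => by
    rw [← hrs i, st2_scalar_smul]
  have hqq : ∀ i, ((Q i : SL2C) : Matrix (Fin 2) (Fin 2) ℂ) *
      ((Q i : SL2C) : Matrix (Fin 2) (Fin 2) ℂ) = r i • 1 := fun i => by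
    rw [← Matrix.SpecialLinearGroup.coe_mul]; exact hscoe i
  have hqmul : ∀ i (x : Matrix (Fin 2) (Fin 2) ℂ),
      ((Q i : SL2C) : Matrix (Fin 2) (Fin 2) ℂ) *
        (((Q i : SL2C) : Matrix (Fin 2) (Fin 2) ℂ) * x) = r i • x := fun i x => by
    rw [← mul_assoc, hqq, smul_mul_assoc, one_mul]
  -- the product D of all lifts is central
  set D : SL2C := Q 0 * (Q 1 * (Q 2 * (Q 3 * (Q 4 * Q 5)))) with hD_def
  have hD_center : D ∈ Subgroup.center SL2C := by
    have h1 : projPSL D = 1 := by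
      show projPSL (Q 0 * (Q 1 * (Q 2 * (Q 3 * (Q 4 * Q 5))))) = 1
      simp only [_root_.map_mul, hQ']
      rw [← _root_.map_mul, ← _root_.map_mul, ← _root_.map_mul, ← _root_.map_mul, ← _root_.map_mul, qgen_prod, _root_.map_one]
    exact (QuotientGroup.eq_one_iff _).mp h1
  obtain ⟨rd, hrdpow, hrd⟩ := Matrix.SpecialLinearGroup.mem_center_iff.mp hD_center
  have hrd2 : rd * rd = 1 := by rwa [Fintype.card_fin, pow_two] at hrdpow
  have hDcoe : ((D : SL2C) : Matrix (Fin 2) (Fin 2) ℂ) = rd • 1 := by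
    rw [← hrd, st2_scalar_smul]
  -- decompose the images of σ
  have hσ' : ∀ x : Gamma2, projPSL (σ x) = ρ' (iota x) := fun x => by
    rw [← MonoidHom.comp_apply, hσ, MonoidHom.comp_apply]
  have hι1 : iota a1 = qgen 1 * qgen 0 := PresentedGroup.toGroup.of _
  have hι2 : iota b1 = qgen 1 * qgen 2 := PresentedGroup.toGroup.of _
  have hι3 : iota a2 = qgen 4 * qgen 3 := PresentedGroup.toGroup.of _
  have hι4 : iota b2 = qgen 4 * qgen 5 := PresentedGroup.toGroup.of _
  have hdec : ∀ (x : Gamma2) (w : SL2C), projPSL (σ x) = projPSL w →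
      ∃ z : SL2C, z ∈ Subgroup.center SL2C ∧ σ x = z * w := by
    intro x w hw
    have h1 : projPSL (σ x * w⁻¹) = 1 := by
      rw [_root_.map_mul, _root_.map_inv, hw, mul_inv_cancel]
    exact ⟨σ x * w⁻¹, (QuotientGroup.eq_one_iff _).mp h1, by group⟩
  obtain ⟨z1, hz1c, hz1⟩ := hdec a1 (Q 1 * Q 0)
    (by simp only [hσ', hι1, _root_.map_mul, hQ'])
  obtain ⟨z2, hz2c, hz2⟩ := hdec b1 (Q 1 * Q 2)
    (by simp only [hσ', hι2, _root_.map_mul, hQ'])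
  obtain ⟨z3, hz3c, hz3⟩ := hdec a2 (Q 4 * Q 3)
    (by simp only [hσ', hι3, _root_.map_mul, hQ'])
  obtain ⟨z4, hz4c, hz4⟩ := hdec b2 (Q 4 * Q 5)
    (by simp only [hσ', hι4, _root_.map_mul, hQ'])
  -- the surface relation in SL2C
  have hrelSL : ((σ b2)⁻¹ * ((σ a2)⁻¹ * (σ b2 * σ a2))) *
      ((σ b1)⁻¹ * ((σ a1)⁻¹ * (σ b1 * σ a1))) = 1 := by
    have h0 := congrArg σ st2_gamma2_rel
    simpa only [_root_.map_mul, _root_.map_inv, _root_.map_one] using h0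
  rw [hz1, hz2, hz3, hz4] at hrelSL
  rw [st2_comm_cancel (Q 4 * Q 3) (Q 4 * Q 5) z3 z4
      (fun g => (Subgroup.mem_center_iff.mp hz3c g).symm)
      (fun g => (Subgroup.mem_center_iff.mp hz4c g).symm),
    st2_comm_cancel (Q 1 * Q 0) (Q 1 * Q 2) z1 z2
      (fun g => (Subgroup.mem_center_iff.mp hz1c g).symm)
      (fun g => (Subgroup.mem_center_iff.mp hz2c g).symm)] at hrelSL
  -- eliminate inverses
  have hscomm : ∀ i (g : SL2C), s i * g = g * s i := fun i g =>
    (Subgroup.mem_center_iff.mp (hs_center i) g).symm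
  have hs2 : ∀ i, s i * s i = 1 := fun i => Subtype.ext (by
    rw [Matrix.SpecialLinearGroup.coe_mul, hscoe, smul_mul_assoc, one_mul, smul_smul, hr2 i,
      one_smul, Matrix.SpecialLinearGroup.coe_one])
  have hinv : ∀ i, (Q i)⁻¹ = s i * Q i := fun i => by
    apply inv_eq_of_mul_eq_one_right
    rw [← mul_assoc, ← hscomm i (Q i), mul_assoc]
    rw [show Q i * Q i = s i from rfl]
    exact hs2 i
  set u : SL2C := Q 2 * (Q 1 * Q 0) with hu_def
  set v : SL2C := Q 5 * (Q 4 * Q 3) with hv_def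
  set Sl : SL2C := s 0 * (s 1 * (s 2 * (s 3 * (s 4 * s 5)))) with hSl_def
  set S : ℂ := r 0 * (r 1 * (r 2 * (r 3 * (r 4 * r 5)))) with hS_def
  have hSlcoe : ((Sl : SL2C) : Matrix (Fin 2) (Fin 2) ℂ) = S • 1 := by
    rw [hSl_def, hS_def]
    simp only [Matrix.SpecialLinearGroup.coe_mul, hscoe, smul_mul_assoc, mul_smul_comm,
      smul_smul, one_mul, mul_one]
    congr 1
    ring
  have c1 : (Q 1 * Q 2)⁻¹ * ((Q 1 * Q 0)⁻¹ * ((Q 1 * Q 2) * (Q 1 * Q 0))) =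
      (s 0 * (s 1 * s 2)) * (u * u) := by
    rw [_root_.mul_inv_rev, _root_.mul_inv_rev, hinv 0, hinv 1, hinv 2]
    apply Subtype.ext
    simp only [Matrix.SpecialLinearGroup.coe_mul, hscoe, hu_def, smul_mul_assoc, mul_smul_comm,
      smul_smul, one_mul, mul_one, mul_assoc, hqmul, hqq]
    congr 1
    linear_combination (r 0 * r 1 * r 2) * hr2 1
  have c2 : (Q 4 * Q 5)⁻¹ * ((Q 4 * Q 3)⁻¹ * ((Q 4 * Q 5) * (Q 4 * Q 3))) =
      (s 3 * (s 4 * s 5)) * (v * v) := by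
    rw [_root_.mul_inv_rev, _root_.mul_inv_rev, hinv 3, hinv 4, hinv 5]
    apply Subtype.ext
    simp only [Matrix.SpecialLinearGroup.coe_mul, hscoe, hv_def, smul_mul_assoc, mul_smul_comm,
      smul_smul, one_mul, mul_one, mul_assoc, hqmul, hqq]
    congr 1
    linear_combination (r 3 * r 4 * r 5) * hr2 4
  have combine : ((s 3 * (s 4 * s 5)) * (v * v)) * ((s 0 * (s 1 * s 2)) * (u * u)) =
      Sl * (v * (v * (u * u))) := by
    apply Subtype.ext
    simp only [Matrix.SpecialLinearGroup.coe_mul, hscoe, hSlcoe, smul_mul_assoc, mul_smul_comm,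
      smul_smul, one_mul, mul_one, mul_assoc]
    congr 1
    ring
  rw [c1, c2, combine] at hrelSL
  -- the key scalar computation using D
  have hUDv : u * (D * v) = Sl := by
    rw [hu_def, hv_def, hD_def, hSl_def]
    apply Subtype.ext
    simp only [Matrix.SpecialLinearGroup.coe_mul, hscoe, smul_mul_assoc, mul_smul_comm,
      smul_smul, one_mul, mul_one, mul_assoc, hqmul, hqq]
    congr 1
    ring
  have hkey1 : ((u : SL2C) : Matrix (Fin 2) (Fin 2) ℂ) * ((v : SL2C) : Matrix (Fin 2) (Fin 2) ℂ)
      = (rd * S) • 1 := by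
    have h3 := congrArg (fun g : SL2C => (g : Matrix (Fin 2) (Fin 2) ℂ)) hUDv
    simp only [Matrix.SpecialLinearGroup.coe_mul, hDcoe, hSlcoe, smul_mul_assoc, mul_smul_comm,
      one_mul, mul_one] at h3
    calc ((u : SL2C) : Matrix (Fin 2) (Fin 2) ℂ) * ((v : SL2C) : Matrix (Fin 2) (Fin 2) ℂ)
        = (rd * rd) • (((u : SL2C) : Matrix (Fin 2) (Fin 2) ℂ) *
            ((v : SL2C) : Matrix (Fin 2) (Fin 2) ℂ)) := by rw [hrd2, one_smul]
      _ = rd • (rd • (((u : SL2C) : Matrix (Fin 2) (Fin 2) ℂ) *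
            ((v : SL2C) : Matrix (Fin 2) (Fin 2) ℂ))) := by rw [smul_smul]
      _ = rd • (S • 1) := by rw [h3]
      _ = (rd * S) • 1 := by rw [smul_smul]
  have huinv : ((u⁻¹ : SL2C) : Matrix (Fin 2) (Fin 2) ℂ) * ((u : SL2C) : Matrix (Fin 2) (Fin 2) ℂ)
      = 1 := by
    rw [← Matrix.SpecialLinearGroup.coe_mul, inv_mul_cancel, Matrix.SpecialLinearGroup.coe_one]
  have hvu : ((v : SL2C) : Matrix (Fin 2) (Fin 2) ℂ) * ((u : SL2C) : Matrix (Fin 2) (Fin 2) ℂ)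
      = (rd * S) • 1 := by
    calc ((v : SL2C) : Matrix (Fin 2) (Fin 2) ℂ) * ((u : SL2C) : Matrix (Fin 2) (Fin 2) ℂ)
        = (((u⁻¹ : SL2C) : Matrix (Fin 2) (Fin 2) ℂ) * ((u : SL2C) : Matrix (Fin 2) (Fin 2) ℂ)) *
          (((v : SL2C) : Matrix (Fin 2) (Fin 2) ℂ) * ((u : SL2C) : Matrix (Fin 2) (Fin 2) ℂ)) := by
          rw [huinv, one_mul]
      _ = ((u⁻¹ : SL2C) : Matrix (Fin 2) (Fin 2) ℂ) *
          ((((u : SL2C) : Matrix (Fin 2) (Fin 2) ℂ) * ((v : SL2C) : Matrix (Fin 2) (Fin 2) ℂ)) *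
            ((u : SL2C) : Matrix (Fin 2) (Fin 2) ℂ)) := by
          simp only [mul_assoc]
      _ = ((u⁻¹ : SL2C) : Matrix (Fin 2) (Fin 2) ℂ) *
          (((rd * S) • 1) * ((u : SL2C) : Matrix (Fin 2) (Fin 2) ℂ)) := by rw [hkey1]
      _ = (rd * S) • (((u⁻¹ : SL2C) : Matrix (Fin 2) (Fin 2) ℂ) *
            ((u : SL2C) : Matrix (Fin 2) (Fin 2) ℂ)) := by
          rw [smul_mul_assoc, one_mul, mul_smul_comm]
      _ = (rd * S) • 1 := by
          rw [huinv]
  have hS2 : S * S = 1 := by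
    rw [hS_def]
    linear_combination (r 1 * r 2 * r 3 * r 4 * r 5)^2 * hr2 0 +
      (r 2 * r 3 * r 4 * r 5)^2 * hr2 1 + (r 3 * r 4 * r 5)^2 * hr2 2 +
      (r 4 * r 5)^2 * hr2 3 + (r 5)^2 * hr2 4 + hr2 5
  have hW : ((v * (v * (u * u)) : SL2C) : Matrix (Fin 2) (Fin 2) ℂ) = 1 := by
    calc ((v * (v * (u * u)) : SL2C) : Matrix (Fin 2) (Fin 2) ℂ)
        = ((v : SL2C) : Matrix (Fin 2) (Fin 2) ℂ) *
          ((((v : SL2C) : Matrix (Fin 2) (Fin 2) ℂ) * ((u : SL2C) : Matrix (Fin 2) (Fin 2) ℂ)) *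
            ((u : SL2C) : Matrix (Fin 2) (Fin 2) ℂ)) := by
          simp only [Matrix.SpecialLinearGroup.coe_mul, mul_assoc]
      _ = ((v : SL2C) : Matrix (Fin 2) (Fin 2) ℂ) *
          (((rd * S) • 1) * ((u : SL2C) : Matrix (Fin 2) (Fin 2) ℂ)) := by rw [hvu]
      _ = (rd * S) • (((v : SL2C) : Matrix (Fin 2) (Fin 2) ℂ) *
            ((u : SL2C) : Matrix (Fin 2) (Fin 2) ℂ)) := by
          rw [smul_mul_assoc, one_mul, mul_smul_comm]
      _ = (rd * S) • ((rd * S) • (1 : Matrix (Fin 2) (Fin 2) ℂ)) := by rw [hvu]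
      _ = ((rd * S) * (rd * S)) • (1 : Matrix (Fin 2) (Fin 2) ℂ) := by rw [smul_smul]
      _ = 1 := by
          rw [show (rd * S) * (rd * S) = 1 by linear_combination (S * S) * hrd2 + hS2, one_smul]
  have hW' : v * (v * (u * u)) = 1 := Subtype.ext (by
    rw [hW, Matrix.SpecialLinearGroup.coe_one])
  rw [hW', mul_one] at hrelSL
  -- so Sl = 1, hence S = 1
  have hS1 : S = 1 := by
    apply st2_smul_one_eq_one
    rw [← hSlcoe, hrelSL, Matrix.SpecialLinearGroup.coe_one]
  -- but exactly one qᵢ is killed, so S = -1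
  obtain ⟨i₀, hi₀, huniq⟩ := h
  have hio : ∀ i, ρ' (qgen i) = 1 → r i = 1 := by
    intro i hi
    have hP : projPSL (Q i) = 1 := by rw [hQ' i, hi]
    have hQc : Q i ∈ Subgroup.center SL2C := (QuotientGroup.eq_one_iff _).mp hP
    obtain ⟨t, ht2, htQ⟩ := Matrix.SpecialLinearGroup.mem_center_iff.mp hQc
    have ht2' : t * t = 1 := by rwa [Fintype.card_fin, pow_two] at ht2
    apply st2_smul_one_eq_one
    calc r i • (1 : Matrix (Fin 2) (Fin 2) ℂ) = ((s i : SL2C) : Matrix (Fin 2) (Fin 2) ℂ) :=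
          (hscoe i).symm
      _ = ((Q i : SL2C) : Matrix (Fin 2) (Fin 2) ℂ) *
          ((Q i : SL2C) : Matrix (Fin 2) (Fin 2) ℂ) := by
          rw [show (s i : SL2C) = Q i * Q i from rfl, Matrix.SpecialLinearGroup.coe_mul]
      _ = (t • 1) * (t • 1) := by rw [← htQ, st2_scalar_smul]
      _ = 1 := by rw [smul_mul_assoc, one_mul, smul_smul, ht2', one_smul]
  have hio' : ∀ i, r i = 1 → ρ' (qgen i) = 1 := by
    intro i hi
    have hsi : Q i * Q i = 1 := Subtype.ext (by
      rw [show ((Q i * Q i : SL2C) : Matrix (Fin 2) (Fin 2) ℂ) =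
        ((s i : SL2C) : Matrix (Fin 2) (Fin 2) ℂ) from rfl, hscoe i, hi, one_smul,
        Matrix.SpecialLinearGroup.coe_one])
    have hQc : Q i ∈ Subgroup.center SL2C := st2_sq_one_mem_center (Q i) hsi
    rw [← hQ' i]
    exact (QuotientGroup.eq_one_iff _).mpr hQc
  have hpm : ∀ i, r i = 1 ∨ r i = -1 := fun i => mul_self_eq_one_iff.mp (hr2 i)
  have hval : ∀ j, r j = if j = i₀ then 1 else -1 := by
    intro j
    by_cases hj : j = i₀
    · rw [if_pos hj, hj]; exact hio i₀ hi₀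
    · rw [if_neg hj]
      rcases hpm j with h1 | h1
      · exact absurd (huniq j (hio' j h1)) hj
      · exact h1
  have hSneg : S = -1 := by
    rw [hS_def, hval 0, hval 1, hval 2, hval 3, hval 4, hval 5]
    fin_cases i₀ <;> simp (config := { decide := true })
  rw [hSneg] at hS1
  norm_num at hS1
end
end

section
/- For each i ∈ {1,…,5}, the assignment σᵢ(qᵢ) = q_{i+1}, σᵢ(q_{i+1}) = q_{i+1}qᵢq_{i+1}, and σᵢ(qⱼ) = qⱼ for j ≠ i, i+1, defines a group automorphism σᵢ of Γ, and there exists a group automorphism φᵢ of Γ₂ such that ι ∘ φᵢ = σᵢ ∘ ι. Moreover, for any such φᵢ and any pentagon representation ρ : Γ₂ → PSL(2,ℂ), the composition ρ ∘ φᵢ is again a pentagon representation. -/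
/- Common setup: PSL(2,ℂ), its action on ℙ¹(ℂ), loxodromic/parabolic/elliptic elements,
elementary subgroups, surface groups, the pentagon group Γ and the embedding ι. -/

noncomputable section

open Matrix

section Aux

lemma qgen_inv (j : Fin 6) : (qgen j)⁻¹ = qgen j :=
  inv_eq_of_mul_eq_one_right (qgen_mul_self j)

lemma pentLift_rels {G : Type*} [Group G] (x : Fin 6 → G)
    (hsq : ∀ j, x j * x j = 1)
    (hp : x 0 * (x 1 * (x 2 * (x 3 * (x 4 * x 5)))) = 1) :
    ∀ r ∈ pentagonRels, FreeGroup.lift x r = 1 := by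
  intro r hr
  rcases hr with ⟨j, rfl⟩ | hr
  · simp [hsq j]
  · simp only [Set.mem_singleton_iff] at hr
    subst hr
    have h6 : List.finRange 6 = [0,1,2,3,4,5] := by decide
    rw [h6]
    simpa [List.prod_cons] using hp

/-- Lift a map on generators to `GammaP`. -/
def pentLift {G : Type*} [Group G] (x : Fin 6 → G)
    (hsq : ∀ j, x j * x j = 1)
    (hp : x 0 * (x 1 * (x 2 * (x 3 * (x 4 * x 5)))) = 1) : GammaP →* G :=
  PresentedGroup.toGroup (pentLift_rels x hsq hp)

@[simp] lemma pentLift_qgen {G : Type*} [Group G] (x : Fin 6 → G)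
    (hsq : ∀ j, x j * x j = 1)
    (hp : x 0 * (x 1 * (x 2 * (x 3 * (x 4 * x 5)))) = 1) (j : Fin 6) :
    pentLift x hsq hp (qgen j) = x j :=
  PresentedGroup.toGroup.of _

/-- Generator targets in a group. -/
def g2val {G : Type*} [Group G] (A B C D : G) : Fin 2 × Bool → G
  | (0, false) => A
  | (0, true) => B
  | (1, false) => C
  | (1, true) => D

lemma g2Lift_rels {G : Type*} [Group G] (A B C D : G)
    (h : (D⁻¹ * C⁻¹ * D * C) * (B⁻¹ * A⁻¹ * B * A) = 1) :
    ∀ r ∈ ({surfaceRel 2} : Set (FreeGroup (Fin 2 × Bool))),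
      FreeGroup.lift (g2val A B C D) r = 1 := by
  intro r hr
  rw [Set.mem_singleton_iff] at hr
  subst hr
  rw [surfaceRel_two]
  simp only [commF, _root_.map_mul, _root_.map_inv, FreeGroup.lift_apply_of]
  have h1 : g2val A B C D ((0 : Fin 2), false) = A := rfl
  have h2 : g2val A B C D ((0 : Fin 2), true) = B := rfl
  have h3 : g2val A B C D ((1 : Fin 2), false) = C := rfl
  have h4 : g2val A B C D ((1 : Fin 2), true) = D := rfl
  rw [h1, h2, h3, h4]
  exact h

/-- Lift a map on generators to `Gamma2`. -/
def g2Lift {G : Type*} [Group G] (A B C D : G)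
    (h : (D⁻¹ * C⁻¹ * D * C) * (B⁻¹ * A⁻¹ * B * A) = 1) : Gamma2 →* G :=
  PresentedGroup.toGroup (g2Lift_rels A B C D h)

@[simp] lemma g2Lift_a1 {G : Type*} [Group G] (A B C D : G) (h) :
    g2Lift A B C D h a1 = A := PresentedGroup.toGroup.of _
@[simp] lemma g2Lift_b1 {G : Type*} [Group G] (A B C D : G) (h) :
    g2Lift A B C D h b1 = B := PresentedGroup.toGroup.of _
@[simp] lemma g2Lift_a2 {G : Type*} [Group G] (A B C D : G) (h) :
    g2Lift A B C D h a2 = C := PresentedGroup.toGroup.of _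
@[simp] lemma g2Lift_b2 {G : Type*} [Group G] (A B C D : G) (h) :
    g2Lift A B C D h b2 = D := PresentedGroup.toGroup.of _

lemma rel2 : (b2⁻¹ * a2⁻¹ * b2 * a2) * (b1⁻¹ * a1⁻¹ * b1 * a1) = 1 := by
  have hmem : commF (FreeGroup.of ((1 : Fin 2), false)) (FreeGroup.of ((1 : Fin 2), true)) *
      commF (FreeGroup.of ((0 : Fin 2), false)) (FreeGroup.of ((0 : Fin 2), true)) ∈
      ({surfaceRel 2} : Set (FreeGroup (Fin 2 × Bool))) := by
    rw [Set.mem_singleton_iff, surfaceRel_two]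
  have h := (QuotientGroup.eq_one_iff _).mpr (Subgroup.subset_normalClosure hmem)
  simp only [commF, _root_.map_mul, _root_.map_inv] at h
  exact h

@[simp] lemma iota_a1 : iota a1 = qgen 1 * qgen 0 := PresentedGroup.toGroup.of _
@[simp] lemma iota_b1 : iota b1 = qgen 1 * qgen 2 := PresentedGroup.toGroup.of _
@[simp] lemma iota_a2 : iota a2 = qgen 4 * qgen 3 := PresentedGroup.toGroup.of _
@[simp] lemma iota_b2 : iota b2 = qgen 4 * qgen 5 := PresentedGroup.toGroup.of _

/-- Build a `MulAut` from mutually inverse endomorphisms. -/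
def autOfComp {M : Type*} [Group M] (f g : M →* M)
    (h1 : g.comp f = MonoidHom.id M) (h2 : f.comp g = MonoidHom.id M) : MulAut M :=
  { toFun := f, invFun := g,
    left_inv := fun x => DFunLike.congr_fun h1 x,
    right_inv := fun x => DFunLike.congr_fun h2 x,
    map_mul' := f.map_mul }

@[simp] lemma autOfComp_apply {M : Type*} [Group M] (f g : M →* M) (h1 h2) (x : M) :
    autOfComp f g h1 h2 x = f x := rfl

lemma autOfComp_toMonoidHom {M : Type*} [Group M] (f g : M →* M) (h1 h2) :
    (autOfComp f g h1 h2).toMonoidHom = f := rfl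

lemma conj_sq {G : Type*} [Group G] (a b : G) (ha : a * a = 1) (hb : b * b = 1) :
    (b * a * b) * (b * a * b) = 1 := by
  calc (b * a * b) * (b * a * b) = b * (a * ((b * b) * (a * b))) := by group
    _ = b * ((a * a) * b) := by rw [hb, one_mul]; group
    _ = b * b := by rw [ha, one_mul]
    _ = 1 := hb

lemma pair_swap {G : Type*} [Group G] (a b t : G) (hb : b * b = 1) :
    b * ((b * a * b) * t) = a * (b * t) := by
  calc b * ((b * a * b) * t) = (b * b) * (a * (b * t)) := by group
    _ = a * (b * t) := by rw [hb, one_mul]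

lemma pair_swap' {G : Type*} [Group G] (a b : G) (hb : b * b = 1) :
    b * (b * a * b) = a * b := by
  calc b * (b * a * b) = (b * b) * (a * b) := by group
    _ = a * b := by rw [hb, one_mul]

lemma pair_swap_inv {G : Type*} [Group G] (a b t : G) (ha : a * a = 1) :
    (a * b * a) * (a * t) = a * (b * t) := by
  calc (a * b * a) * (a * t) = a * (b * ((a * a) * t)) := by group
    _ = a * (b * t) := by rw [ha, one_mul]

lemma pair_swap_inv' {G : Type*} [Group G] (a b : G) (ha : a * a = 1) :
    (a * b * a) * a = a * b := by
  calc (a * b * a) * a = a * (b * (a * a)) := by group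
    _ = a * b := by rw [ha, mul_one]

lemma sandwich {G : Type*} [Group G] (a b : G) (hb : b * b = 1) :
    b * (b * a * b) * b = a := by
  calc b * (b * a * b) * b = (b * b) * (a * (b * b)) := by group
    _ = a := by rw [hb, one_mul, mul_one]

lemma conj_one {G : Type*} [Group G] {r : G} (h : r = 1) (c T : G)
    (hT : T = c * r * c⁻¹) : T = 1 := by
  rw [hT, h, mul_one, mul_inv_cancel]

lemma hq3 : qgen 2 * ((qgen 1 * qgen 0) * (qgen 5 * qgen 4)) = qgen 3 := by
  have h2 : qgen 3 = (qgen 2)⁻¹ * ((qgen 1)⁻¹ * ((qgen 0)⁻¹ *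
      ((qgen 0 * (qgen 1 * (qgen 2 * (qgen 3 * (qgen 4 * qgen 5))))) *
        ((qgen 5)⁻¹ * (qgen 4)⁻¹)))) := by group
  rw [qgen_prod] at h2
  rw [h2]
  simp only [one_mul, qgen_inv]
  group

end Aux
section VecLit
variable {α : Type*} (A B C D E F : α)
@[simp] lemma vec6_two : (![A,B,C,D,E,F] : Fin 6 → α) 2 = C := rfl
@[simp] lemma vec6_three : (![A,B,C,D,E,F] : Fin 6 → α) 3 = D := rfl
@[simp] lemma vec6_four : (![A,B,C,D,E,F] : Fin 6 → α) 4 = E := rfl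
@[simp] lemma vec6_five : (![A,B,C,D,E,F] : Fin 6 → α) 5 = F := rfl
end VecLit
lemma pentext {G : Type*} [Group G] (f g : GammaP →* G)
    (h : ∀ j, f (qgen j) = g (qgen j)) : f = g := by
  ext j; exact h j

lemma g2ext {G : Type*} [Group G] (f g : Gamma2 →* G)
    (h1 : f a1 = g a1) (h2 : f b1 = g b1) (h3 : f a2 = g a2) (h4 : f b2 = g b2) : f = g := by
  ext ⟨j, bo⟩
  fin_cases j <;> cases bo
  · exact h1
  · exact h2
  · exact h3
  · exact h4

def x0 : Fin 6 → GammaP := ![qgen 1, qgen 1 * qgen 0 * qgen 1, qgen 2, qgen 3, qgen 4, qgen 5]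
def y0 : Fin 6 → GammaP := ![qgen 0 * qgen 1 * qgen 0, qgen 0, qgen 2, qgen 3, qgen 4, qgen 5]

def sig0 : GammaP →* GammaP := pentLift x0
  (by intro j; fin_cases j <;> simp [x0] <;>
      first
        | exact qgen_mul_self _
        | exact conj_sq _ _ (qgen_mul_self _) (qgen_mul_self _))
  (by show qgen 1 * ((qgen 1 * qgen 0 * qgen 1) * (qgen 2 * (qgen 3 * (qgen 4 * qgen 5)))) = 1
      rw [pair_swap _ _ _ (qgen_mul_self 1)]
      exact qgen_prod)

def tau0 : GammaP →* GammaP := pentLift y0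
  (by intro j; fin_cases j <;> simp [y0] <;>
      first
        | exact qgen_mul_self _
        | exact conj_sq _ _ (qgen_mul_self _) (qgen_mul_self _))
  (by show (qgen 0 * qgen 1 * qgen 0) * (qgen 0 * (qgen 2 * (qgen 3 * (qgen 4 * qgen 5)))) = 1
      rw [pair_swap_inv _ _ _ (qgen_mul_self 0)]
      exact qgen_prod)

def aut0 : MulAut GammaP := autOfComp sig0 tau0
  (by apply pentext; intro j; fin_cases j <;>
        simp [sig0, tau0, x0, y0, _root_.map_mul] <;>
        first
          | rfl
          | exact sandwich _ _ (qgen_mul_self _))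
  (by apply pentext; intro j; fin_cases j <;>
        simp [sig0, tau0, x0, y0, _root_.map_mul] <;>
        first
          | rfl
          | exact sandwich _ _ (qgen_mul_self _))
def phif0 : Gamma2 →* Gamma2 := g2Lift a1 (a1 * b1) a2 b2
  (conj_one rel2 1 _ (by group))
def psif0 : Gamma2 →* Gamma2 := g2Lift a1 (a1⁻¹ * b1) a2 b2
  (conj_one rel2 1 _ (by group))

def phi0 : MulAut Gamma2 := autOfComp phif0 psif0
  (by apply g2ext <;> simp [phif0, psif0, _root_.map_mul, _root_.map_inv] <;> group)
  (by apply g2ext <;> simp [phif0, psif0, _root_.map_mul, _root_.map_inv] <;> group)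

lemma hphi0 : iota.comp phi0.toMonoidHom = aut0.toMonoidHom.comp iota := by
  apply g2ext <;>
    (simp [phi0, aut0, phif0, sig0, x0, _root_.map_mul, _root_.map_inv, _root_.mul_inv_rev,
      qgen_inv] <;>
     first
      | rfl
      | exact (pair_swap_inv' (qgen 1) (qgen 0) (qgen_mul_self 1)).symm
      | group)

lemma case0 : ∃ σ : MulAut GammaP,
    (σ (qgen 0) = qgen 1 ∧ σ (qgen 1) = qgen 1 * qgen 0 * qgen 1 ∧
      ∀ j : Fin 6, j ≠ 0 → j ≠ 1 → σ (qgen j) = qgen j) ∧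
    ∃ φ : MulAut Gamma2, iota.comp φ.toMonoidHom = σ.toMonoidHom.comp iota := by
  refine ⟨aut0, ⟨by simp [aut0, sig0, x0], by simp [aut0, sig0, x0], ?_⟩, phi0, hphi0⟩
  intro j h0 h1
  fin_cases j <;> simp_all [aut0, sig0, x0] <;> rfl
lemma conj_eq_one_iff' {G : Type*} [Group G] (u x : G) (hu : u * u = 1) :
    u * x * u = 1 ↔ x = 1 := by
  constructor
  · intro h
    have hx : x = u⁻¹ * (u * x * u) * u⁻¹ := by group
    rw [h] at hx
    rw [hx, show u⁻¹ * 1 * u⁻¹ = (u * u)⁻¹ from by group, hu, inv_one]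
  · intro h
    rw [h, mul_one, hu]

lemma preserve (σ : MulAut GammaP) (a b : Fin 6)
    (h1 : σ (qgen a) = qgen b) (h2 : σ (qgen b) = qgen b * qgen a * qgen b)
    (h3 : ∀ j, j ≠ a → j ≠ b → σ (qgen j) = qgen j)
    (φ : MulAut Gamma2) (hφ : iota.comp φ.toMonoidHom = σ.toMonoidHom.comp iota)
    (ρ : Gamma2 →* PSL2C) (hρ : IsPentagonRep ρ) :
    IsPentagonRep (ρ.comp φ.toMonoidHom) := by
  obtain ⟨hne, ρ', hcomp, k, hk, huk⟩ := hρ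
  have hrange : (ρ.comp φ.toMonoidHom).range = ρ.range := by
    ext x
    constructor
    · rintro ⟨y, rfl⟩; exact ⟨φ y, rfl⟩
    · rintro ⟨y, rfl⟩
      exact ⟨φ.symm y, by simp⟩
  constructor
  · unfold IsNonElem at *
    rw [hrange]
    exact hne
  · refine ⟨ρ'.comp σ.toMonoidHom, ?_, ?_⟩
    · rw [MonoidHom.comp_assoc, ← hφ, ← MonoidHom.comp_assoc, hcomp]
    · set p := Equiv.swap a b with hp
      have hbb : ρ' (qgen b) * ρ' (qgen b) = 1 := by
        rw [← _root_.map_mul, qgen_mul_self, _root_.map_one]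
      have key : ∀ j, (ρ'.comp σ.toMonoidHom) (qgen j) = 1 ↔ ρ' (qgen (p j)) = 1 := by
        intro j
        by_cases hja : j = a
        · subst hja
          simp only [MonoidHom.comp_apply, MulEquiv.coe_toMonoidHom, h1, hp,
            Equiv.swap_apply_left]
        by_cases hjb : j = b
        · rw [hjb]
          simp only [MonoidHom.comp_apply, MulEquiv.coe_toMonoidHom, h2, hp,
            Equiv.swap_apply_right, _root_.map_mul]
          exact conj_eq_one_iff' _ _ hbb
        · simp only [MonoidHom.comp_apply, MulEquiv.coe_toMonoidHom, h3 j hja hjb, hp,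
            Equiv.swap_apply_of_ne_of_ne hja hjb]
      refine ⟨p k, ?_, ?_⟩
      · show (ρ'.comp σ.toMonoidHom) (qgen (p k)) = 1
        rw [key, Equiv.swap_apply_self]
        exact hk
      · intro j hj
        have hj' : (ρ'.comp σ.toMonoidHom) (qgen j) = 1 := hj
        have hpj : p j = k := huk _ ((key j).mp hj')
        calc j = p (p j) := (Equiv.swap_apply_self a b j).symm
          _ = p k := by rw [hpj]
@[simp] lemma qgen_sq_cancel (j : Fin 6) (t : GammaP) : qgen j * (qgen j * t) = t := by
  rw [← mul_assoc, qgen_mul_self, one_mul]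

lemma hq3r : qgen 2 * (qgen 1 * (qgen 0 * (qgen 5 * qgen 4))) = qgen 3 := by
  rw [← hq3]; group

lemma hq23r : qgen 2 * qgen 3 = qgen 1 * (qgen 0 * (qgen 5 * qgen 4)) := by
  rw [← hq3r, qgen_sq_cancel]

/-! ### Case 1 -/

def x1 : Fin 6 → GammaP := ![qgen 0, qgen 2, qgen 2 * qgen 1 * qgen 2, qgen 3, qgen 4, qgen 5]
def y1 : Fin 6 → GammaP := ![qgen 0, qgen 1 * qgen 2 * qgen 1, qgen 1, qgen 3, qgen 4, qgen 5]

def sig1 : GammaP →* GammaP := pentLift x1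
  (by intro j; fin_cases j <;> simp [x1] <;>
      first
        | exact qgen_mul_self _
        | exact conj_sq _ _ (qgen_mul_self _) (qgen_mul_self _))
  (by show qgen 0 * (qgen 2 * ((qgen 2 * qgen 1 * qgen 2) * (qgen 3 * (qgen 4 * qgen 5)))) = 1
      rw [pair_swap _ _ _ (qgen_mul_self 2)]
      exact qgen_prod)

def tau1 : GammaP →* GammaP := pentLift y1
  (by intro j; fin_cases j <;> simp [y1] <;>
      first
        | exact qgen_mul_self _
        | exact conj_sq _ _ (qgen_mul_self _) (qgen_mul_self _))
  (by show qgen 0 * ((qgen 1 * qgen 2 * qgen 1) * (qgen 1 * (qgen 3 * (qgen 4 * qgen 5)))) = 1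
      rw [pair_swap_inv _ _ _ (qgen_mul_self 1)]
      exact qgen_prod)

def aut1 : MulAut GammaP := autOfComp sig1 tau1
  (by apply pentext; intro j; fin_cases j <;>
        simp [sig1, tau1, x1, y1, _root_.map_mul] <;>
        first
          | rfl
          | exact sandwich _ _ (qgen_mul_self _))
  (by apply pentext; intro j; fin_cases j <;>
        simp [sig1, tau1, x1, y1, _root_.map_mul] <;>
        first
          | rfl
          | exact sandwich _ _ (qgen_mul_self _))

def phif1 : Gamma2 →* Gamma2 := g2Lift (b1⁻¹ * a1) b1 a2 b2
  (conj_one rel2 1 _ (by group))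
def psif1 : Gamma2 →* Gamma2 := g2Lift (b1 * a1) b1 a2 b2
  (conj_one rel2 1 _ (by group))

def phi1 : MulAut Gamma2 := autOfComp phif1 psif1
  (by apply g2ext <;> simp [phif1, psif1, _root_.map_mul, _root_.map_inv] <;> group)
  (by apply g2ext <;> simp [phif1, psif1, _root_.map_mul, _root_.map_inv] <;> group)

lemma hphi1 : iota.comp phi1.toMonoidHom = aut1.toMonoidHom.comp iota := by
  apply g2ext <;>
    simp [phi1, aut1, phif1, sig1, x1, _root_.map_mul, _root_.map_inv, _root_.mul_inv_rev,
      qgen_inv, mul_assoc, qgen_mul_self, Matrix.cons_val_succ]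

lemma case1 : ∃ σ : MulAut GammaP,
    (σ (qgen 1) = qgen 2 ∧ σ (qgen 2) = qgen 2 * qgen 1 * qgen 2 ∧
      ∀ j : Fin 6, j ≠ 1 → j ≠ 2 → σ (qgen j) = qgen j) ∧
    ∃ φ : MulAut Gamma2, iota.comp φ.toMonoidHom = σ.toMonoidHom.comp iota := by
  refine ⟨aut1, ⟨by simp [aut1, sig1, x1], by simp [aut1, sig1, x1], ?_⟩, phi1, hphi1⟩
  intro j h0 h1
  fin_cases j <;> simp_all [aut1, sig1, x1] <;> rfl

/-! ### Case 2 -/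

def x2 : Fin 6 → GammaP := ![qgen 0, qgen 1, qgen 3, qgen 3 * qgen 2 * qgen 3, qgen 4, qgen 5]
def y2 : Fin 6 → GammaP := ![qgen 0, qgen 1, qgen 2 * qgen 3 * qgen 2, qgen 2, qgen 4, qgen 5]

def sig2 : GammaP →* GammaP := pentLift x2
  (by intro j; fin_cases j <;> simp [x2] <;>
      first
        | exact qgen_mul_self _
        | exact conj_sq _ _ (qgen_mul_self _) (qgen_mul_self _))
  (by show qgen 0 * (qgen 1 * (qgen 3 * ((qgen 3 * qgen 2 * qgen 3) * (qgen 4 * qgen 5)))) = 1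
      rw [pair_swap _ _ _ (qgen_mul_self 3)]
      exact qgen_prod)

def tau2 : GammaP →* GammaP := pentLift y2
  (by intro j; fin_cases j <;> simp [y2] <;>
      first
        | exact qgen_mul_self _
        | exact conj_sq _ _ (qgen_mul_self _) (qgen_mul_self _))
  (by show qgen 0 * (qgen 1 * ((qgen 2 * qgen 3 * qgen 2) * (qgen 2 * (qgen 4 * qgen 5)))) = 1
      rw [pair_swap_inv _ _ _ (qgen_mul_self 2)]
      exact qgen_prod)

def aut2 : MulAut GammaP := autOfComp sig2 tau2
  (by apply pentext; intro j; fin_cases j <;>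
        simp [sig2, tau2, x2, y2, _root_.map_mul] <;>
        first
          | rfl
          | exact sandwich _ _ (qgen_mul_self _))
  (by apply pentext; intro j; fin_cases j <;>
        simp [sig2, tau2, x2, y2, _root_.map_mul] <;>
        first
          | rfl
          | exact sandwich _ _ (qgen_mul_self _))

def phif2 : Gamma2 →* Gamma2 := g2Lift a1 (b1 * a1 * b2⁻¹) (a2 * a1 * b2⁻¹) b2
  (conj_one rel2 (a1⁻¹ * b2) _ (by group))
def psif2 : Gamma2 →* Gamma2 := g2Lift a1 (b1 * b2 * a1⁻¹) (a2 * b2 * a1⁻¹) b2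
  (conj_one rel2 (b2⁻¹ * a1) _ (by group))

def phi2 : MulAut Gamma2 := autOfComp phif2 psif2
  (by apply g2ext <;> simp [phif2, psif2, _root_.map_mul, _root_.map_inv] <;> group)
  (by apply g2ext <;> simp [phif2, psif2, _root_.map_mul, _root_.map_inv] <;> group)

lemma hphi2 : iota.comp phi2.toMonoidHom = aut2.toMonoidHom.comp iota := by
  apply g2ext <;>
    simp [phi2, aut2, phif2, sig2, x2, _root_.map_mul, _root_.map_inv, _root_.mul_inv_rev,
      qgen_inv, mul_assoc, qgen_mul_self, hq3r, hq23r, Matrix.cons_val_succ]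

lemma case2 : ∃ σ : MulAut GammaP,
    (σ (qgen 2) = qgen 3 ∧ σ (qgen 3) = qgen 3 * qgen 2 * qgen 3 ∧
      ∀ j : Fin 6, j ≠ 2 → j ≠ 3 → σ (qgen j) = qgen j) ∧
    ∃ φ : MulAut Gamma2, iota.comp φ.toMonoidHom = σ.toMonoidHom.comp iota := by
  refine ⟨aut2, ⟨by simp [aut2, sig2, x2], by simp [aut2, sig2, x2, Matrix.cons_val_succ], ?_⟩,
    phi2, hphi2⟩
  intro j h0 h1
  fin_cases j <;> simp_all [aut2, sig2, x2] <;> rfl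

/-! ### Case 3 -/

def x3 : Fin 6 → GammaP := ![qgen 0, qgen 1, qgen 2, qgen 4, qgen 4 * qgen 3 * qgen 4, qgen 5]
def y3 : Fin 6 → GammaP := ![qgen 0, qgen 1, qgen 2, qgen 3 * qgen 4 * qgen 3, qgen 3, qgen 5]

def sig3 : GammaP →* GammaP := pentLift x3
  (by intro j; fin_cases j <;> simp [x3] <;>
      first
        | exact qgen_mul_self _
        | exact conj_sq _ _ (qgen_mul_self _) (qgen_mul_self _))
  (by show qgen 0 * (qgen 1 * (qgen 2 * (qgen 4 * ((qgen 4 * qgen 3 * qgen 4) * qgen 5)))) = 1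
      rw [pair_swap _ _ _ (qgen_mul_self 4)]
      exact qgen_prod)

def tau3 : GammaP →* GammaP := pentLift y3
  (by intro j; fin_cases j <;> simp [y3] <;>
      first
        | exact qgen_mul_self _
        | exact conj_sq _ _ (qgen_mul_self _) (qgen_mul_self _))
  (by show qgen 0 * (qgen 1 * (qgen 2 * ((qgen 3 * qgen 4 * qgen 3) * (qgen 3 * qgen 5)))) = 1
      rw [pair_swap_inv _ _ _ (qgen_mul_self 3)]
      exact qgen_prod)

def aut3 : MulAut GammaP := autOfComp sig3 tau3
  (by apply pentext; intro j; fin_cases j <;>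
        simp [sig3, tau3, x3, y3, _root_.map_mul] <;>
        first
          | rfl
          | exact sandwich _ _ (qgen_mul_self _))
  (by apply pentext; intro j; fin_cases j <;>
        simp [sig3, tau3, x3, y3, _root_.map_mul] <;>
        first
          | rfl
          | exact sandwich _ _ (qgen_mul_self _))

def phif3 : Gamma2 →* Gamma2 := g2Lift a1 b1 a2 (a2 * b2)
  (conj_one rel2 1 _ (by group))
def psif3 : Gamma2 →* Gamma2 := g2Lift a1 b1 a2 (a2⁻¹ * b2)
  (conj_one rel2 1 _ (by group))

def phi3 : MulAut Gamma2 := autOfComp phif3 psif3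
  (by apply g2ext <;> simp [phif3, psif3, _root_.map_mul, _root_.map_inv] <;> group)
  (by apply g2ext <;> simp [phif3, psif3, _root_.map_mul, _root_.map_inv] <;> group)

lemma hphi3 : iota.comp phi3.toMonoidHom = aut3.toMonoidHom.comp iota := by
  apply g2ext <;>
    simp [phi3, aut3, phif3, sig3, x3, _root_.map_mul, _root_.map_inv, _root_.mul_inv_rev,
      qgen_inv, mul_assoc, qgen_mul_self, Matrix.cons_val_succ]

lemma case3 : ∃ σ : MulAut GammaP,
    (σ (qgen 3) = qgen 4 ∧ σ (qgen 4) = qgen 4 * qgen 3 * qgen 4 ∧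
      ∀ j : Fin 6, j ≠ 3 → j ≠ 4 → σ (qgen j) = qgen j) ∧
    ∃ φ : MulAut Gamma2, iota.comp φ.toMonoidHom = σ.toMonoidHom.comp iota := by
  refine ⟨aut3, ⟨by simp [aut3, sig3, x3], by simp [aut3, sig3, x3, Matrix.cons_val_succ], ?_⟩,
    phi3, hphi3⟩
  intro j h0 h1
  fin_cases j <;> simp_all [aut3, sig3, x3] <;> rfl

/-! ### Case 4 -/

def x4 : Fin 6 → GammaP := ![qgen 0, qgen 1, qgen 2, qgen 3, qgen 5, qgen 5 * qgen 4 * qgen 5]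
def y4 : Fin 6 → GammaP := ![qgen 0, qgen 1, qgen 2, qgen 3, qgen 4 * qgen 5 * qgen 4, qgen 4]

def sig4 : GammaP →* GammaP := pentLift x4
  (by intro j; fin_cases j <;> simp [x4] <;>
      first
        | exact qgen_mul_self _
        | exact conj_sq _ _ (qgen_mul_self _) (qgen_mul_self _))
  (by show qgen 0 * (qgen 1 * (qgen 2 * (qgen 3 * (qgen 5 * (qgen 5 * qgen 4 * qgen 5))))) = 1
      rw [pair_swap' _ _ (qgen_mul_self 5)]
      exact qgen_prod)

def tau4 : GammaP →* GammaP := pentLift y4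
  (by intro j; fin_cases j <;> simp [y4] <;>
      first
        | exact qgen_mul_self _
        | exact conj_sq _ _ (qgen_mul_self _) (qgen_mul_self _))
  (by show qgen 0 * (qgen 1 * (qgen 2 * (qgen 3 * ((qgen 4 * qgen 5 * qgen 4) * qgen 4)))) = 1
      rw [pair_swap_inv' _ _ (qgen_mul_self 4)]
      exact qgen_prod)

def aut4 : MulAut GammaP := autOfComp sig4 tau4
  (by apply pentext; intro j; fin_cases j <;>
        simp [sig4, tau4, x4, y4, _root_.map_mul] <;>
        first
          | rfl
          | exact sandwich _ _ (qgen_mul_self _))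
  (by apply pentext; intro j; fin_cases j <;>
        simp [sig4, tau4, x4, y4, _root_.map_mul] <;>
        first
          | rfl
          | exact sandwich _ _ (qgen_mul_self _))

def phif4 : Gamma2 →* Gamma2 := g2Lift a1 b1 (b2⁻¹ * a2) b2
  (conj_one rel2 1 _ (by group))
def psif4 : Gamma2 →* Gamma2 := g2Lift a1 b1 (b2 * a2) b2
  (conj_one rel2 1 _ (by group))

def phi4 : MulAut Gamma2 := autOfComp phif4 psif4
  (by apply g2ext <;> simp [phif4, psif4, _root_.map_mul, _root_.map_inv] <;> group)
  (by apply g2ext <;> simp [phif4, psif4, _root_.map_mul, _root_.map_inv] <;> group)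

lemma hphi4 : iota.comp phi4.toMonoidHom = aut4.toMonoidHom.comp iota := by
  apply g2ext <;>
    simp [phi4, aut4, phif4, sig4, x4, _root_.map_mul, _root_.map_inv, _root_.mul_inv_rev,
      qgen_inv, mul_assoc, qgen_mul_self, Matrix.cons_val_succ]

lemma case4 : ∃ σ : MulAut GammaP,
    (σ (qgen 4) = qgen 5 ∧ σ (qgen 5) = qgen 5 * qgen 4 * qgen 5 ∧
      ∀ j : Fin 6, j ≠ 4 → j ≠ 5 → σ (qgen j) = qgen j) ∧
    ∃ φ : MulAut Gamma2, iota.comp φ.toMonoidHom = σ.toMonoidHom.comp iota := by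
  refine ⟨aut4, ⟨by simp [aut4, sig4, x4], by simp [aut4, sig4, x4, Matrix.cons_val_succ], ?_⟩,
    phi4, hphi4⟩
  intro j h0 h1
  fin_cases j <;> simp_all [aut4, sig4, x4] <;> rfl

/-- the automorphisms `σᵢ` of `Γ` exist, lift to automorphisms `φᵢ` of `Γ₂` along
`ι`, and precomposition by any such `φᵢ` preserves pentagon representations. -/
theorem statement7 (i : Fin 5) :
    ∃ σ : MulAut GammaP,
      (σ (qgen i.castSucc) = qgen i.succ ∧
        σ (qgen i.succ) = qgen i.succ * qgen i.castSucc * qgen i.succ ∧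
        ∀ j : Fin 6, j ≠ i.castSucc → j ≠ i.succ → σ (qgen j) = qgen j) ∧
      (∃ φ : MulAut Gamma2, iota.comp φ.toMonoidHom = σ.toMonoidHom.comp iota) ∧
      (∀ φ : MulAut Gamma2, iota.comp φ.toMonoidHom = σ.toMonoidHom.comp iota →
        ∀ ρ : Gamma2 →* PSL2C, IsPentagonRep ρ → IsPentagonRep (ρ.comp φ.toMonoidHom)) := by
  fin_cases i
  · obtain ⟨σ, h, φ, hφ⟩ := case0
    exact ⟨σ, h, ⟨φ, hφ⟩, fun φ' hφ' => preserve σ 0 1 h.1 h.2.1 h.2.2 φ' hφ'⟩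
  · obtain ⟨σ, h, φ, hφ⟩ := case1
    exact ⟨σ, h, ⟨φ, hφ⟩, fun φ' hφ' => preserve σ 1 2 h.1 h.2.1 h.2.2 φ' hφ'⟩
  · obtain ⟨σ, h, φ, hφ⟩ := case2
    exact ⟨σ, h, ⟨φ, hφ⟩, fun φ' hφ' => preserve σ 2 3 h.1 h.2.1 h.2.2 φ' hφ'⟩
  · obtain ⟨σ, h, φ, hφ⟩ := case3
    exact ⟨σ, h, ⟨φ, hφ⟩, fun φ' hφ' => preserve σ 3 4 h.1 h.2.1 h.2.2 φ' hφ'⟩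
  · obtain ⟨σ, h, φ, hφ⟩ := case4
    exact ⟨σ, h, ⟨φ, hφ⟩, fun φ' hφ' => preserve σ 4 5 h.1 h.2.1 h.2.2 φ' hφ'⟩
end
end
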